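/- Let K be a field. The following are equivalent: (1) K is isomorphic to the field with two elements 𝔽₂; (2) for every positive integer n the matrix ring Mₙ(K) is nil-clean; (3) there exists a positive integer n such that the matrix ring Mₙ(K) is nil-clean. -/

import Mathlib

section Helpers

variable {V : Type} [AddCommGroup V] [Module (ZMod 2) V]

private lemma addSelf (x : V) : x + x = 0 := by
  have h := two_smul (ZMod 2) x
  rw [show (2 : ZMod 2) = 0 by decide, zero_smul] at h
  exact h.symm

private lemma negSelf (x : V) : -x = x := neg_eq_of_add_eq_zero_left (addSelf x)

private lemma nsmul2 (x : V) : (2:ℕ) • x = 0 := by rw [two_smul]; exact addSelf x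
private lemma zsmul2 (x : V) : (2:ℤ) • x = 0 := by rw [two_smul]; exact addSelf x

/-- A linear map acting as a one-sided shift on a spanning family is nilpotent. -/
private lemma shift_pow_eq_zero {n : ℕ} (g : Module.End (ZMod 2) V) (d : Fin n → V)
    (hspan : ⊤ ≤ Submodule.span (ZMod 2) (Set.range d))
    (hg : ∀ i : Fin n, g (d i) = if h : (i : ℕ) + 1 < n then d ⟨(i : ℕ) + 1, h⟩ else 0) :
    g ^ n = 0 := by
  have key : ∀ (j : ℕ) (i : Fin n), n ≤ (i : ℕ) + j → (g ^ j) (d i) = 0 := by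
    intro j
    induction j with
    | zero => intro i h; exact absurd i.isLt (by omega)
    | succ j ih =>
      intro i h
      have h1 : (g ^ (j + 1)) (d i) = (g ^ j) (g (d i)) := by
        rw [pow_succ, Module.End.mul_apply]
      rw [h1, hg i]
      split_ifs with h'
      · exact ih _ (by simpa using by omega)
      · simp
  refine LinearMap.ext_on (top_le_iff.mp hspan) ?_
  rintro x ⟨i, rfl⟩
  simpa using key n i (by omega)

end Helpers


private lemma end_nilclean : ∀ (m : ℕ) (V : Type) [AddCommGroup V] [Module (ZMod 2) V]
    [FiniteDimensional (ZMod 2) V], Module.finrank (ZMod 2) V = m →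
    ∀ f : Module.End (ZMod 2) V,
    ∃ e p : Module.End (ZMod 2) V, IsIdempotentElem e ∧ IsNilpotent p ∧ f = e + p := by
  intro m
  induction m using Nat.strong_induction_on with
  | _ m IH =>
  intro V _ _ _ hm f
  by_cases hinv : ∃ W : Submodule (ZMod 2) V, W ≠ ⊥ ∧ W ≠ ⊤ ∧ ∀ x ∈ W, f x ∈ W
  · obtain ⟨W, hWbot, hWtop, hWinv⟩ := hinv
    obtain ⟨q, hq⟩ := Submodule.exists_isCompl W
    set ι : W →ₗ[ZMod 2] V := W.subtype with hι
    set π : V →ₗ[ZMod 2] W := W.linearProjOfIsCompl q hq with hπ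
    set τ : V →ₗ[ZMod 2] (V ⧸ W) := W.mkQ with hτ
    set ρ : (V ⧸ W) →ₗ[ZMod 2] V :=
      q.subtype ∘ₗ (W.quotientEquivOfIsCompl q hq).toLinearMap with hρ
    have hπι : ∀ w : W, π (ι w) = w := fun w => Submodule.linearProjOfIsCompl_apply_left hq w
    have hπρ : ∀ y, π (ρ y) = 0 := fun y => Submodule.linearProjOfIsCompl_apply_right hq _
    have hτι : ∀ w : W, τ (ι w) = 0 := fun w => by
      simp [hτ, hι, Submodule.mkQ_apply, (Submodule.Quotient.mk_eq_zero W).mpr w.2]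
    have hτρ : ∀ y, τ (ρ y) = y := fun y => by
      simp only [hρ, hτ, LinearMap.comp_apply, LinearEquiv.coe_coe, Submodule.mkQ_apply]
      exact Submodule.mk_quotientEquivOfIsCompl_apply hq y
    -- restriction and quotient maps
    have hfW : ∀ x ∈ W, f x ∈ W := hWinv
    set f₁ : Module.End (ZMod 2) W := f.restrict hfW with hf₁
    have hfι : ∀ w : W, f (ι w) = ι (f₁ w) := fun w => by
      simp [hf₁, LinearMap.restrict_apply, hι]
    have hle : W ≤ W.comap f := fun x hx => hWinv x hx
    set f₂ : Module.End (ZMod 2) (V ⧸ W) := W.mapQ W f hle with hf₂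
    have hfτ : ∀ v : V, f₂ (τ v) = τ (f v) := fun v => by
      simp [hf₂, hτ, Submodule.mkQ_apply, Submodule.mapQ_apply]
    -- dimensions
    have hd1 : Module.finrank (ZMod 2) W < m := by
      rw [← hm]; exact Submodule.finrank_lt hWtop
    have hd2 : Module.finrank (ZMod 2) (V ⧸ W) < m := by
      have h1 := Submodule.finrank_quotient_add_finrank W
      have h2 : 0 < Module.finrank (ZMod 2) W :=
        Module.finrank_pos_iff.mpr (Submodule.nontrivial_iff_ne_bot.mpr hWbot)
      omega
    obtain ⟨e₁, p₁', he₁, hp₁', hfe₁⟩ := IH _ hd1 W rfl f₁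
    obtain ⟨e₂, p₂', he₂, hp₂', hfe₂⟩ := IH _ hd2 (V ⧸ W) rfl f₂
    set p₁ : Module.End (ZMod 2) W := f₁ - e₁ with hp₁def
    set p₂ : Module.End (ZMod 2) (V ⧸ W) := f₂ - e₂ with hp₂def
    have hp₁ : IsNilpotent p₁ := by rw [hp₁def, hfe₁, add_sub_cancel_left]; exact hp₁'
    have hp₂ : IsNilpotent p₂ := by rw [hp₂def, hfe₂, add_sub_cancel_left]; exact hp₂'
    set e : Module.End (ZMod 2) V := ι ∘ₗ e₁ ∘ₗ π + ρ ∘ₗ e₂ ∘ₗ τ with he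
    have heι : ∀ w : W, e (ι w) = ι (e₁ w) := fun w => by
      simp [he, LinearMap.add_apply, LinearMap.comp_apply, hπι, hτι]
    have heρ : ∀ y, e (ρ y) = ρ (e₂ y) := fun y => by
      simp [he, LinearMap.add_apply, LinearMap.comp_apply, hπρ, hτρ]
    have hee : IsIdempotentElem e := by
      refine LinearMap.ext fun x => ?_
      have hx : e x = ι (e₁ (π x)) + ρ (e₂ (τ x)) := by
        simp [he, LinearMap.add_apply, LinearMap.comp_apply]
      rw [Module.End.mul_apply, hx, map_add, heι, heρ,
        show ∀ w, e₁ (e₁ w) = e₁ w from fun w => by rw [← Module.End.mul_apply, he₁],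
        show ∀ y, e₂ (e₂ y) = e₂ y from fun y => by rw [← Module.End.mul_apply, he₂]]
    set p : Module.End (ZMod 2) V := f - e with hp
    have hpι : ∀ w : W, p (ι w) = ι (p₁ w) := fun w => by
      simp only [hp, LinearMap.sub_apply, hfι, heι, hp₁def, map_sub]
    have hpτ : ∀ v : V, τ (p v) = p₂ (τ v) := fun v => by
      have h1 : τ (e v) = e₂ (τ v) := by
        have hx : e v = ι (e₁ (π v)) + ρ (e₂ (τ v)) := by
          simp [he, LinearMap.add_apply, LinearMap.comp_apply]
        rw [hx, map_add, hτι, hτρ, zero_add]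
      simp only [hp, LinearMap.sub_apply, map_sub, h1, hfτ, hp₂def, LinearMap.sub_apply]
    obtain ⟨aa, haa⟩ := hp₂
    obtain ⟨bb, hbb⟩ := hp₁
    have hker : ∀ (k : ℕ) (v : V), τ ((p ^ k) v) = (p₂ ^ k) (τ v) := by
      intro k
      induction k with
      | zero => intro v; simp
      | succ k ih =>
        intro v
        rw [pow_succ', pow_succ', Module.End.mul_apply, Module.End.mul_apply, hpτ, ih]
    have hpow : ∀ (k : ℕ) (w : W), (p ^ k) (ι w) = ι ((p₁ ^ k) w) := by
      intro k
      induction k with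
      | zero => intro w; simp
      | succ k ih =>
        intro w
        rw [pow_succ, pow_succ, Module.End.mul_apply, Module.End.mul_apply, hpι, ih]
    refine ⟨e, p, hee, ⟨bb + aa, ?_⟩, by rw [hp]; abel⟩
    refine LinearMap.ext fun v => ?_
    have h1 : τ ((p ^ aa) v) = 0 := by rw [hker, haa]; simp
    have h2 : (p ^ aa) v ∈ W := by
      rw [← Submodule.ker_mkQ W]; exact LinearMap.mem_ker.mpr h1
    have h3 : (p ^ (bb + aa)) v = (p ^ bb) ((p ^ aa) v) := by
      rw [pow_add, Module.End.mul_apply]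
    rw [h3, show (p ^ aa) v = ι ⟨(p ^ aa) v, h2⟩ from rfl, hpow, hbb]
    simp

  · -- no nontrivial invariant subspace: f is cyclic (or V is trivial)
    rcases Nat.eq_zero_or_pos m with hm0 | hmpos
    · subst hm0
      have hsub : Subsingleton V := Module.finrank_zero_iff.mp hm
      exact ⟨0, 0, by simp [IsIdempotentElem], ⟨1, by simp⟩,
        by refine LinearMap.ext fun x => Subsingleton.elim _ _⟩
    · have hnt : Nontrivial V := Module.finrank_pos_iff.mp (hm ▸ hmpos)
      obtain ⟨v, hv⟩ := exists_ne (0 : V)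
      classical
      have hgs : ∀ k : ℕ, ((f ^ (k+1)) v : V) = f ((f ^ k) v) := fun k => by
        rw [pow_succ', Module.End.mul_apply]
      have hex : ∃ k, ¬ LinearIndependent (ZMod 2) (fun i : Fin (k+1) => (f ^ (i:ℕ)) v) := by
        refine ⟨m, fun h => ?_⟩
        have h2 := h.fintype_card_le_finrank
        rw [Fintype.card_fin, hm] at h2; omega
      obtain ⟨k₀, hk₀D, hk₀min⟩ : ∃ k, (¬ LinearIndependent (ZMod 2)
          (fun i : Fin (k+1) => (f ^ (i:ℕ)) v)) ∧ ∀ j < k,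
          LinearIndependent (ZMod 2) (fun i : Fin (j+1) => (f ^ (i:ℕ)) v) :=
        ⟨Nat.find hex, Nat.find_spec hex, fun j hj => not_not.mp (Nat.find_min hex hj)⟩
      have hk₀pos : 0 < k₀ := by
        rcases Nat.eq_zero_or_pos k₀ with h0 | h
        · exfalso
          apply hk₀D
          subst h0
          haveI : Unique (Fin (0+1)) := ⟨⟨0, by omega⟩, fun a => Fin.ext (by omega)⟩
          exact linearIndependent_unique_iff.mpr (by simpa using hv)
        · exact h
      obtain ⟨n', rfl⟩ : ∃ n', k₀ = n' + 1 := ⟨k₀ - 1, by omega⟩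
      have hInd : LinearIndependent (ZMod 2) (fun i : Fin (n'+1) => (f ^ (i:ℕ)) v) :=
        hk₀min n' (by omega)
      have hsnoc : (fun i : Fin (n'+1+1) => (f ^ (i:ℕ)) v) =
          Fin.snoc (fun i : Fin (n'+1) => (f ^ (i:ℕ)) v) ((f ^ (n'+1)) v) := by
        funext i
        refine Fin.lastCases ?_ ?_ i
        · simp
        · intro j; simp
      have hmem : (f ^ (n'+1)) v ∈
          Submodule.span (ZMod 2) (Set.range fun i : Fin (n'+1) => (f ^ (i:ℕ)) v) := by
        by_contra hmem
        rw [hsnoc, linearIndependent_fin_snoc] at hk₀D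
        exact hk₀D ⟨hInd, hmem⟩
      set W : Submodule (ZMod 2) V :=
        Submodule.span (ZMod 2) (Set.range fun i : Fin (n'+1) => (f ^ (i:ℕ)) v) with hWdef
      have hvW : v ∈ W := Submodule.subset_span ⟨(0 : Fin (n'+1)), by simp⟩
      have hWinv : ∀ x ∈ W, f x ∈ W := by
        intro x hx
        have hmap : Submodule.map f W ≤ W := by
          rw [hWdef, Submodule.map_span, Submodule.span_le]
          rintro y ⟨-, ⟨i, rfl⟩, rfl⟩
          rw [← hgs]
          by_cases hi : (i:ℕ) + 1 < n' + 1
          · exact Submodule.subset_span ⟨⟨(i:ℕ)+1, hi⟩, rfl⟩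
          · have hieq : (i:ℕ) + 1 = n' + 1 := by have := i.isLt; omega
            rw [hieq]; exact hmem
        exact hmap (Submodule.mem_map_of_mem hx)
      have hWbot : W ≠ ⊥ := fun h => hv ((Submodule.mem_bot _).mp (h ▸ hvW))
      have hWtop : W = ⊤ := by
        by_contra h
        exact hinv ⟨W, hWbot, h, hWinv⟩
      obtain ⟨b, hfb⟩ : ∃ b : Module.Basis (Fin (n'+1)) (ZMod 2) V,
          ∀ (j : Fin (n'+1)) (h : (j:ℕ)+1 < n'+1), f (b j) = b ⟨(j:ℕ)+1, h⟩ := by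
        refine ⟨Module.Basis.mk hInd (by rw [← hWdef, hWtop]), fun j h => ?_⟩
        rw [Module.Basis.mk_apply, Module.Basis.mk_apply]
        exact (hgs (j:ℕ)).symm
      clear hgs hex hk₀D hk₀min hk₀pos hInd hsnoc hmem hvW hWinv hWbot hWtop hWdef hv hinv hm
      clear W v hmpos
      obtain ⟨c, hexp⟩ : ∃ c : Fin (n'+1) → ZMod 2,
          f (b (Fin.last n')) = ∑ j, c j • b j :=
        ⟨fun j => b.repr (f (b (Fin.last n'))) j, (b.sum_repr _).symm⟩
      rcases (show ∀ x : ZMod 2, x = 0 ∨ x = 1 by decide) (c (Fin.last n')) with hcL | hcL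
      · -- trace 0
        obtain _ | n'' := n'
        · -- dimension 1, trace 0 : f = 0
          have hf : f = 0 := by
            refine b.ext fun j => ?_
            have hj : j = Fin.last 0 := Fin.ext (by have := j.isLt; rw [Fin.val_last]; omega)
            rw [hj, hexp]
            refine Finset.sum_eq_zero fun i _ => ?_
            have hi : i = Fin.last 0 := Fin.ext (by have := i.isLt; rw [Fin.val_last]; omega)
            rw [hi, hcL, zero_smul]
          exact ⟨0, f, by simp [IsIdempotentElem], ⟨1, by rw [pow_one, hf]⟩, (zero_add f).symm⟩
        obtain _ | mm := n''
        · -- dimension 2, trace 0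
          have hexp2 : f (b (Fin.last 1)) = c 0 • b 0 := by
            rw [hexp]
            refine Finset.sum_eq_single _ (fun j _ hj => ?_) (fun h => absurd (Finset.mem_univ _) h)
            have hjL : j = Fin.last 1 := by
              refine Fin.ext ?_
              rw [Fin.val_last]
              have h2 := j.isLt
              have h3 : (j : ℕ) ≠ 0 := fun h => hj (Fin.ext (by simpa using h))
              omega
            rw [hjL, hcL, zero_smul]
          have hfb0 : f (b 0) = b (Fin.last 1) := hfb 0 (by decide)
          rcases (show ∀ x : ZMod 2, x = 0 ∨ x = 1 by decide) (c 0) with hc0 | hc0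
          · -- f itself is nilpotent
            have hN : ∀ j : Fin (1+1), f (b j) =
                if h : (j:ℕ)+1 < 1+1 then b ⟨(j:ℕ)+1, h⟩ else 0 := by
              intro j
              by_cases h : (j:ℕ)+1 < 1+1
              · rw [dif_pos h]; exact hfb j h
              · have hjL : j = Fin.last 1 := Fin.ext (by rw [Fin.val_last]; have := j.isLt; omega)
                rw [dif_neg h, hjL, hexp2, hc0, zero_smul]
            exact ⟨0, f, by simp [IsIdempotentElem],
              ⟨1+1, shift_pow_eq_zero f b (le_of_eq b.span_eq.symm) hN⟩, (zero_add f).symm⟩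
          · -- c 0 = 1 : f - 1 is nilpotent
            have hfbL : f (b (Fin.last 1)) = b 0 := by rw [hexp2, hc0, one_smul]
            set d : Fin (1+1) → V := fun j =>
              if j = Fin.last 1 then b 0 + b (Fin.last 1) else b j with hddef
            have hd0 : d 0 = b 0 := if_neg (by decide)
            have hdL : d (Fin.last 1) = b 0 + b (Fin.last 1) := if_pos rfl
            have hN : ∀ j : Fin (1+1), (f - 1) (d j) =
                if h : (j:ℕ)+1 < 1+1 then d ⟨(j:ℕ)+1, h⟩ else 0 := by
              intro j
              by_cases h : (j:ℕ)+1 < 1+1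
              · rw [dif_pos h]
                have hj0 : j = 0 := Fin.ext (by simp only [Fin.val_zero]; omega)
                have hdj : d j = b 0 := by rw [hj0, hd0]
                have hidx : (⟨(j:ℕ)+1, h⟩ : Fin (1+1)) = Fin.last 1 :=
                  Fin.ext (by show (j:ℕ)+1 = 1; omega)
                rw [hidx, hdL, hdj, LinearMap.sub_apply, Module.End.one_apply,
                  hfb0, sub_eq_add_neg, negSelf (b 0)]
                abel
              · have hjL : j = Fin.last 1 := Fin.ext (by rw [Fin.val_last]; have := j.isLt; omega)
                have hdj : d j = b 0 + b (Fin.last 1) := by rw [hjL, hdL]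
                rw [dif_neg h, hdj, map_add, LinearMap.sub_apply, LinearMap.sub_apply,
                  Module.End.one_apply, Module.End.one_apply, hfb0, hfbL]
                abel
            have hspan : ⊤ ≤ Submodule.span (ZMod 2) (Set.range d) := by
              rw [← b.span_eq, Submodule.span_le]
              rintro x ⟨i, rfl⟩
              by_cases hi : i = Fin.last 1
              · have hbi : (b i : V) = d (Fin.last 1) - d 0 := by
                  rw [hdL, hd0, hi]; abel
                rw [hbi]
                exact sub_mem (Submodule.subset_span ⟨_, rfl⟩) (Submodule.subset_span ⟨_, rfl⟩)
              · have hbi : (b i : V) = d i := (if_neg hi).symm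
                rw [hbi]
                exact Submodule.subset_span ⟨i, rfl⟩
            exact ⟨1, f - 1, IsIdempotentElem.one,
              ⟨1+1, shift_pow_eq_zero (f - 1) d hspan hN⟩, by abel⟩
        · -- dimension ≥ 3, trace 0
          obtain ⟨i0, hv0⟩ : ∃ i : Fin (mm+1+1+1), (i:ℕ) = mm := ⟨⟨mm, by omega⟩, rfl⟩
          obtain ⟨i1, hv1⟩ : ∃ i : Fin (mm+1+1+1), (i:ℕ) = mm+1 := ⟨⟨mm+1, by omega⟩, rfl⟩
          obtain ⟨i2, hv2⟩ : ∃ i : Fin (mm+1+1+1), (i:ℕ) = mm+2 := ⟨⟨mm+2, by omega⟩, rfl⟩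
          have hLi2 : Fin.last (mm+1+1) = i2 := Fin.ext (by rw [Fin.val_last]; omega)
          have hi01 : i0 ≠ i1 := Fin.ne_of_val_ne (by omega)
          have hi02 : i0 ≠ i2 := Fin.ne_of_val_ne (by omega)
          have hi12 : i1 ≠ i2 := Fin.ne_of_val_ne (by omega)
          have hc2 : c i2 = 0 := by rw [← hLi2]; exact hcL
          have hexp2 : f (b i2) = ∑ j, c j • b j := by rw [← hLi2]; exact hexp
          have hfb1 : f (b i1) = b i2 :=
            (hfb i1 (by omega)).trans (congrArg b (Fin.ext (by show (i1:ℕ)+1 = (i2:ℕ); omega)))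
          have hfb0 : f (b i0) = b i1 :=
            (hfb i0 (by omega)).trans (congrArg b (Fin.ext (by show (i0:ℕ)+1 = (i1:ℕ); omega)))
          obtain ⟨aa, haa⟩ : ∃ x : ZMod 2, x = c i1 + 1 := ⟨_, rfl⟩
          obtain ⟨E, hE⟩ : ∃ E : Module.End (ZMod 2) V,
              ∀ j, E (b j) = if j = i2 then f (b i2) + b i2 + (1+aa) • b i1 + aa • b i0
                else if j = i1 then b i1 + aa • b i0 else 0 :=
            ⟨b.constr ℕ (fun j => if j = i2 then f (b i2) + b i2 + (1+aa) • b i1 + aa • b i0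
              else if j = i1 then b i1 + aa • b i0 else 0),
             fun j => by rw [Module.Basis.constr_basis]⟩
          have hE0 : ∀ j, j ≠ i1 → j ≠ i2 → E (b j) = 0 :=
            fun j h1 h2 => by rw [hE j, if_neg h2, if_neg h1]
          have hE1 : E (b i1) = b i1 + aa • b i0 := by rw [hE, if_neg hi12, if_pos rfl]
          have hE2 : E (b i2) = f (b i2) + b i2 + (1+aa) • b i1 + aa • b i0 := by
            rw [hE, if_pos rfl]
          have hEf : E (f (b i2)) = c i1 • E (b i1) := by
            conv_lhs => rw [hexp2]
            rw [map_sum, Finset.sum_eq_add_of_mem i1 i2 (Finset.mem_univ _) (Finset.mem_univ _)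
              hi12 (fun k _ hk => by rw [map_smul, hE0 k hk.1 hk.2, smul_zero]),
              map_smul, map_smul, hc2, zero_smul, add_zero]
          have hz : c i1 + (1+aa) = 0 := by
            rw [haa]
            exact (show ∀ x : ZMod 2, x + (1 + (x+1)) = 0 by decide) (c i1)
          have hidem : IsIdempotentElem E := by
            refine b.ext fun j => ?_
            rw [Module.End.mul_apply]
            by_cases h2 : j = i2
            · rw [h2]
              conv_lhs => rw [hE2]
              rw [map_add, map_add, map_add, map_smul, map_smul, hEf,
                hE0 i0 hi01 hi02, smul_zero, add_zero]
              have htmp : c i1 • E (b i1) + E (b i2) + (1+aa) • E (b i1)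
                  = E (b i2) + (c i1 + (1+aa)) • E (b i1) := by rw [add_smul (c i1) (1+aa)]; abel
              rw [htmp, hz, zero_smul, add_zero]
            · by_cases h1 : j = i1
              · rw [h1]
                conv_lhs => rw [hE1]
                rw [map_add, map_smul, hE0 i0 hi01 hi02, smul_zero, add_zero]
              · rw [hE0 j h1 h2, map_zero]
          have hNi0 : (f - E) (b i0) = b i1 := by
            rw [LinearMap.sub_apply, hE0 i0 hi01 hi02, sub_zero, hfb0]
          have hN1 : (f - E) (b i1) = b i2 + (b i1 + aa • b i0) := by
            rw [LinearMap.sub_apply, hE1, hfb1, sub_eq_add_neg, negSelf (b i1 + aa • b i0)]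
          have hN2 : (f - E) (b i2) = b i2 + (1+aa) • b i1 + aa • b i0 := by
            rw [LinearMap.sub_apply, hE2]
            have htmp : f (b i2) - (f (b i2) + b i2 + (1+aa) • b i1 + aa • b i0)
                = -(b i2 + (1+aa) • b i1 + aa • b i0) := by abel
            rw [htmp, negSelf]
          obtain ⟨d, hdv, hd2⟩ : ∃ d : Fin (mm+1+1+1) → V,
              (∀ j, j ≠ i2 → d j = b j) ∧ d i2 = aa • b i0 + b i1 + b i2 :=
            ⟨fun j => if j = i2 then aa • b i0 + b i1 + b i2 else b j,
             fun j h => if_neg h, if_pos rfl⟩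
          have hshift : ∀ j : Fin (mm+1+1+1), (f - E) (d j) =
              if h : (j:ℕ)+1 < mm+1+1+1 then d ⟨(j:ℕ)+1, h⟩ else 0 := by
            intro j
            by_cases h2 : j = i2
            · rw [dif_neg (by rw [h2]; omega)]
              have hdj : d j = aa • b i0 + b i1 + b i2 := by rw [h2, hd2]
              rw [hdj, map_add, map_add, map_smul, hNi0, hN1, hN2, add_smul, one_smul]
              abel_nf
              simp only [zsmul2, nsmul2]
              simp
            · have h : (j:ℕ)+1 < mm+1+1+1 := by
                have hne : (j:ℕ) ≠ (i2:ℕ) := fun hh => h2 (Fin.ext hh)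
                have := j.isLt
                omega
              rw [dif_pos h]
              by_cases h1 : j = i1
              · have hdj : d j = b i1 := by rw [h1]; exact hdv i1 hi12
                have hidx : (⟨(j:ℕ)+1, h⟩ : Fin (mm+1+1+1)) = i2 :=
                  Fin.ext (by show (j:ℕ)+1 = (i2:ℕ); rw [h1]; omega)
                rw [hidx, hd2, hdj, hN1]
                abel
              · have hdj : d j = b j := hdv j h2
                have hidx : (⟨(j:ℕ)+1, h⟩ : Fin (mm+1+1+1)) ≠ i2 := by
                  intro hh
                  apply h1
                  refine Fin.ext ?_
                  have hval : (j:ℕ)+1 = (i2:ℕ) := congrArg Fin.val hh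
                  omega
                rw [hdj, hdv _ hidx]
                have hbj : (f - E) (b j) = b ⟨(j:ℕ)+1, h⟩ := by
                  rw [LinearMap.sub_apply, hE0 j h1 h2, sub_zero, hfb j h]
                exact hbj
          have hspan : ⊤ ≤ Submodule.span (ZMod 2) (Set.range d) := by
            rw [← b.span_eq, Submodule.span_le]
            rintro x ⟨i, rfl⟩
            by_cases hi : i = i2
            · have hbi : (b i : V) = d i2 - aa • d i0 - d i1 := by
                rw [hd2, hdv i0 hi02, hdv i1 hi12, hi]; abel
              rw [hbi]
              exact sub_mem (sub_mem (Submodule.subset_span ⟨_, rfl⟩)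
                (Submodule.smul_mem _ _ (Submodule.subset_span ⟨_, rfl⟩)))
                (Submodule.subset_span ⟨_, rfl⟩)
            · rw [show (b i : V) = d i from (hdv i hi).symm]
              exact Submodule.subset_span ⟨i, rfl⟩
          exact ⟨E, f - E, hidem,
            ⟨mm+1+1+1, shift_pow_eq_zero (f - E) d hspan hshift⟩, by abel⟩
      · -- trace 1 : rank-one idempotent
        set E : Module.End (ZMod 2) V :=
          b.constr ℕ (fun j => if j = Fin.last n' then f (b (Fin.last n')) else 0) with hEdef
        have hE : ∀ j, E (b j) = if j = Fin.last n' then f (b (Fin.last n')) else 0 :=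
          fun j => by rw [hEdef, Module.Basis.constr_basis]
        have hEf : E (f (b (Fin.last n'))) = f (b (Fin.last n')) := by
          conv_lhs => rw [hexp]
          rw [map_sum]
          calc (∑ j, E (c j • b j))
              = ∑ j, (if j = Fin.last n' then c j • f (b (Fin.last n')) else 0) := by
                refine Finset.sum_congr rfl fun j _ => ?_
                rw [map_smul, hE]
                split <;> simp
            _ = c (Fin.last n') • f (b (Fin.last n')) := by
                rw [Finset.sum_ite_eq' Finset.univ]
                simp
            _ = f (b (Fin.last n')) := by rw [hcL, one_smul]
        have hee : IsIdempotentElem E := by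
          refine b.ext fun i => ?_
          rw [Module.End.mul_apply]
          by_cases h : i = Fin.last n'
          · subst h
            conv_lhs => rw [hE, if_pos rfl]
            rw [hEf, hE, if_pos rfl]
          · rw [hE i, if_neg h, map_zero]
        have hN : ∀ j : Fin (n'+1), (f - E) (b j) =
            if h : (j:ℕ)+1 < n'+1 then b ⟨(j:ℕ)+1, h⟩ else 0 := by
          intro j
          rw [LinearMap.sub_apply]
          by_cases h : (j:ℕ)+1 < n'+1
          · have hjL : j ≠ Fin.last n' := by
              intro hh; rw [hh, Fin.val_last] at h; omega
            rw [dif_pos h, hE, if_neg hjL, sub_zero, hfb j h]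
          · have hjL : j = Fin.last n' := by
              have := j.isLt; exact Fin.ext (by rw [Fin.val_last]; omega)
            rw [dif_neg h, hjL, hE, if_pos rfl, sub_self]
        exact ⟨E, f - E, hee,
          ⟨n'+1, shift_pow_eq_zero (f - E) b (le_of_eq b.span_eq.symm) hN⟩, by abel⟩
/-- An element of a ring is nil-clean if it is the sum of an idempotent and a nilpotent. -/
def IsNilCleanRing (R : Type*) [Ring R] : Prop :=
  ∀ a : R, ∃ e n : R, IsIdempotentElem e ∧ IsNilpotent n ∧ a = e + n

private lemma nilclean_transfer {R S : Type*} [Ring R] [Ring S] (e : R ≃+* S)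
    (h : IsNilCleanRing R) : IsNilCleanRing S := by
  intro a
  obtain ⟨E, N, hE, hN, hsum⟩ := h (e.symm a)
  refine ⟨e E, e N, ?_, ?_, ?_⟩
  · show e E * e E = e E
    rw [← map_mul, hE]
  · obtain ⟨k, hk⟩ := hN
    exact ⟨k, by rw [← map_pow, hk, map_zero]⟩
  · have h2 := congrArg e hsum
    rwa [RingEquiv.apply_symm_apply, map_add] at h2

private lemma matrix_zmod2_nilclean (n : ℕ) :
    IsNilCleanRing (Matrix (Fin n) (Fin n) (ZMod 2)) := by
  have hEnd : IsNilCleanRing (Module.End (ZMod 2) (Fin n → ZMod 2)) := by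
    intro f
    obtain ⟨e, p, he, hp, hf⟩ :=
      end_nilclean (Module.finrank (ZMod 2) (Fin n → ZMod 2)) (Fin n → ZMod 2) rfl f
    exact ⟨e, p, he, hp, hf⟩
  exact nilclean_transfer (LinearMap.toMatrixAlgEquiv' :
    ((Fin n → ZMod 2) →ₗ[ZMod 2] (Fin n → ZMod 2)) ≃ₐ[ZMod 2]
      Matrix (Fin n) (Fin n) (ZMod 2)).toRingEquiv hEnd

private lemma field_idem_of_matrix_nilclean {K : Type*} [Field K] {n : ℕ} (hn : 0 < n)
    (h : IsNilCleanRing (Matrix (Fin n) (Fin n) K)) : ∀ a : K, a * a = a := by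
  intro a
  set M := Matrix (Fin n) (Fin n) K
  obtain ⟨E, N, hE, hN, hsum⟩ := h (a • 1)
  have hA : algebraMap K M a = E + N := by
    rw [Algebra.algebraMap_eq_smul_one]; exact hsum
  have hCN : Commute (algebraMap K M a) N := Algebra.commutes a N
  have hCommEN : Commute E N := by
    have hEeq : E = algebraMap K M a - N := by rw [hA]; abel
    rw [hEeq]
    exact hCN.sub_left (Commute.refl N)
  have hNE : N * E = E * N := hCommEN.eq.symm
  have key : algebraMap K M (a * a - a) = (2 • E + N - 1) * N := by
    rw [map_sub, map_mul, hA, sub_mul, one_mul, add_mul, add_mul, smul_mul_assoc,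
      mul_add, mul_add, hE, hNE]
    abel
  have hCommBN : Commute (2 • E + N - 1) N :=
    ((hCommEN.smul_left 2).add_left (Commute.refl N)).sub_left (Commute.one_left N)
  have hnil : IsNilpotent (algebraMap K M (a * a - a)) :=
    key ▸ hCommBN.isNilpotent_mul_left hN
  obtain ⟨k, hk⟩ := hnil
  have hent : (a * a - a) ^ k = 0 := by
    have h1 : algebraMap K M ((a * a - a) ^ k) = 0 := by rw [map_pow, hk]
    have h2 := congrFun (congrFun h1 ⟨0, hn⟩) ⟨0, hn⟩
    rw [Algebra.algebraMap_eq_smul_one] at h2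
    rw [show ((((a * a - a) ^ k) • (1 : M)) ⟨0, hn⟩ ⟨0, hn⟩ : K)
        = ((a * a - a) ^ k) * (1 : M) ⟨0, hn⟩ ⟨0, hn⟩ from rfl,
      Matrix.one_apply_eq, mul_one] at h2
    exact h2.trans rfl
  have : a * a - a = 0 := isNilpotent_iff_eq_zero.mp ⟨k, hent⟩
  exact sub_eq_zero.mp this

theorem nilClean_matrix_field_tfae (K : Type*) [Field K] :
    List.TFAE
      [Nonempty (K ≃+* ZMod 2),
       ∀ n : ℕ, 0 < n → IsNilCleanRing (Matrix (Fin n) (Fin n) K),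
       ∃ n : ℕ, 0 < n ∧ IsNilCleanRing (Matrix (Fin n) (Fin n) K)] := by
  tfae_have 1 → 2 := by
    rintro ⟨ψ⟩ n hn
    exact nilclean_transfer (RingEquiv.mapMatrix ψ.symm) (matrix_zmod2_nilclean n)
  tfae_have 2 → 3 := fun h => ⟨1, one_pos, h 1 one_pos⟩
  tfae_have 3 → 1 := by
    rintro ⟨n, hn, h⟩
    have hidem := field_idem_of_matrix_nilclean hn h
    have hchar2 : (2 : K) = 0 := by
      have h4 := hidem 2
      have h5 : (2 : K) * (2 - 1) = 0 := by rw [mul_sub, h4, mul_one, sub_self]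
      rcases mul_eq_zero.mp h5 with h6 | h6
      · exact h6
      · exfalso
        have h7 : (2 : K) = 1 := by rwa [sub_eq_zero] at h6
        have h8 : (1 : K) + 1 = 1 + 0 := by rw [one_add_one_eq_two, h7, add_zero]
        exact one_ne_zero (add_left_cancel h8)
    haveI : CharP K 2 := (CharP.charP_iff_prime_eq_zero Nat.prime_two).mpr (by
      push_cast
      exact hchar2)
    set φ := ZMod.castHom (dvd_refl 2) K with hφ
    have hsurj : Function.Surjective φ := by
      intro x
      have h9 : x * (x - 1) = 0 := by rw [mul_sub, hidem x, mul_one, sub_self]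
      rcases mul_eq_zero.mp h9 with h10 | h10
      · exact ⟨0, by rw [map_zero, h10]⟩
      · exact ⟨1, by rw [map_one, (sub_eq_zero.mp h10).symm]⟩
    exact ⟨(RingEquiv.ofBijective φ ⟨φ.injective, hsurj⟩).symm⟩
  tfae_finish
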